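/- Suppose f, g ∈ ℝ[x₁,…,xₙ] are coprime. Then for any point a ∈ ℝ^{n-1} and any r > 0, there exists a point a' ∈ ℝ^{n-1} with ‖a - a'‖ < r such that for all t ∈ ℝ, the point (a', t) is not a common real zero of f and g. -/

import Mathlib

open MvPolynomial

open scoped nonZeroDivisors



lemma aux_near {m : ℕ} (d : MvPolynomial (Fin m) ℝ) (hd : d ≠ 0) (a : Fin m → ℝ)
    {r : ℝ} (hr : 0 < r) :
    ∃ a' : Fin m → ℝ, Real.sqrt (∑ i, (a i - a' i) ^ 2) < r ∧ MvPolynomial.eval a' d ≠ 0 := by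
  obtain ⟨b, hb⟩ : ∃ b, MvPolynomial.eval b d ≠ 0 := by
    by_contra hc
    push_neg at hc
    exact hd (MvPolynomial.funext fun x => by simp [hc x])
  set q : Polynomial ℝ :=
    MvPolynomial.eval₂ Polynomial.C
      (fun i => Polynomial.C (a i) + Polynomial.C (b i - a i) * Polynomial.X) d with hqdef
  have hqs : ∀ s : ℝ, q.eval s = MvPolynomial.eval (fun i => a i + s * (b i - a i)) d := by
    intro s
    have h1 := MvPolynomial.eval₂_comp_left (Polynomial.evalRingHom s) Polynomial.C
      (fun i => Polynomial.C (a i) + Polynomial.C (b i - a i) * Polynomial.X) d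
    have h2 : (Polynomial.evalRingHom s).comp Polynomial.C = RingHom.id ℝ := by
      ext x; simp
    rw [hqdef]
    show (Polynomial.evalRingHom s) _ = _
    rw [h1, h2]
    rw [MvPolynomial.eval]
    congr 1
    funext i
    simp [mul_comm]
  have hq1 : q.eval 1 ≠ 0 := by
    rw [hqs]
    have : (fun i => a i + 1 * (b i - a i)) = b := by funext i; ring
    rw [this]; exact hb
  have hq0 : q ≠ 0 := fun h0 => hq1 (by simp [h0])
  have hroots : Set.Finite {x : ℝ | q.IsRoot x} := Polynomial.finite_setOf_isRoot hq0
  set M := Real.sqrt (∑ i, (a i - b i) ^ 2) with hM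
  have hM0 : 0 ≤ M := Real.sqrt_nonneg _
  have hε : 0 < r / (M + 1) := div_pos hr (by linarith)
  obtain ⟨s, hs⟩ : ((Set.Ioo (0:ℝ) (r / (M+1))) \ {x : ℝ | q.IsRoot x}).Nonempty :=
    ((Set.Ioo_infinite hε).diff hroots).nonempty
  obtain ⟨⟨hs0, hsε⟩, hsroot⟩ := hs
  refine ⟨fun i => a i + s * (b i - a i), ?_, ?_⟩
  · have hsum : ∑ i, (a i - (a i + s * (b i - a i))) ^ 2 = s ^ 2 * ∑ i, (a i - b i) ^ 2 := by
      rw [Finset.mul_sum]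
      exact Finset.sum_congr rfl fun i _ => by ring
    rw [hsum, Real.sqrt_mul (sq_nonneg s), Real.sqrt_sq hs0.le, ← hM]
    calc s * M ≤ s * (M + 1) := by nlinarith
      _ < r := by
        rw [← lt_div_iff₀ (by linarith : (0:ℝ) < M + 1)] at *
        exact hsε
  · rw [← hqs]
    exact fun h0 => hsroot h0


lemma aux_bezout {A : Type*} [CommRing A] [IsDomain A] [UniqueFactorizationMonoid A]
    {F G : Polynomial A} (h : IsRelPrime F G) (hF : F ≠ 0) :
    ∃ (u v : Polynomial A) (d : A), d ≠ 0 ∧ u * F + v * G = Polynomial.C d := by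
  classical
  letI : NormalizationMonoid A := UniqueFactorizationMonoid.normalizationMonoid.toNormalizationMonoid
  letI : NormalizedGCDMonoid A := UniqueFactorizationMonoid.toNormalizedGCDMonoid A
  set K := FractionRing A
  set φ := algebraMap A K with hφ
  have hinj : Function.Injective φ := IsFractionRing.injective A K
  have hpinj : Function.Injective (Polynomial.map φ) := Polynomial.map_injective φ hinj
  have hco : IsCoprime (F.map φ) (G.map φ) := by
    by_contra hnc
    have hF' : F.map φ ≠ 0 := by
      intro h0
      exact hF (Polynomial.map_eq_zero_iff hinj |>.mp h0)
    set D := EuclideanDomain.gcd (F.map φ) (G.map φ) with hD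
    have hD0 : D ≠ 0 := fun h0 => hF' (EuclideanDomain.gcd_eq_zero_iff.mp h0).1
    have hDu : ¬ IsUnit D := fun hu => hnc (EuclideanDomain.gcd_isUnit_iff.mp hu)
    obtain ⟨q, hqirr, hqD⟩ := WfDvdMonoid.exists_irreducible_factor hDu hD0
    have hqF : q ∣ F.map φ := hqD.trans (EuclideanDomain.gcd_dvd_left _ _)
    have hqG : q ∣ G.map φ := hqD.trans (EuclideanDomain.gcd_dvd_right _ _)
    have hqprime : Prime q := hqirr.prime
    have hq0 : q ≠ 0 := hqprime.ne_zero
    set q₁ := IsLocalization.integerNormalization A⁰ q with hq₁def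
    obtain ⟨b, hb⟩ := IsLocalization.integerNormalization_map_to_map A⁰ q
    rw [← hq₁def] at hb
    have hb0 : φ (b : A) ≠ 0 := by
      have : (b : A) ≠ 0 := nonZeroDivisors.coe_ne_zero b
      exact fun hc => this (hinj (by simpa using hc))
    have hq₁0 : q₁ ≠ 0 := by
      rw [hq₁def, Ne, IsFractionRing.integerNormalization_eq_zero_iff]
      exact hq0
    set q₂ := q₁.primPart with hq₂def
    have hq₂prim : q₂.IsPrimitive := q₁.isPrimitive_primPart
    have hc0 : φ q₁.content ≠ 0 := by
      have : q₁.content ≠ 0 := fun hc => hq₁0 (Polynomial.content_eq_zero_iff.mp hc)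
      exact fun hc => this (hinj (by simpa using hc))
    have h1 : q₁.map φ = Polynomial.C (φ (b : A)) * q := by
      rw [hb, Algebra.smul_def]
      congr 1
    have h2 : q₁.map φ = Polynomial.C (φ q₁.content) * q₂.map φ := by
      conv_lhs => rw [q₁.eq_C_content_mul_primPart]
      rw [Polynomial.map_mul, Polynomial.map_C]
    have key : Polynomial.C (φ (b : A)) * q = Polynomial.C (φ q₁.content) * q₂.map φ :=
      h1 ▸ h2
    have hdiv0 : φ (b : A) / φ q₁.content ≠ 0 := div_ne_zero hb0 hc0
    have hmain : q₂.map φ = q * Polynomial.C (φ (b : A) / φ q₁.content) := by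
      apply mul_right_cancel₀ (show (Polynomial.C (φ q₁.content)) ≠ 0 by simpa using hc0)
      rw [mul_assoc, ← Polynomial.C_mul, div_mul_cancel₀ _ hc0]
      linear_combination -key
    have hassoc : Associated q (q₂.map φ) := by
      have hu : IsUnit (Polynomial.C (φ (b : A) / φ q₁.content)) :=
        Polynomial.isUnit_C.mpr (isUnit_iff_ne_zero.mpr hdiv0)
      exact ⟨hu.unit, by rw [IsUnit.unit_spec]; exact hmain.symm⟩
    have hdvd : ∀ P : Polynomial A, P ≠ 0 → q ∣ P.map φ → q₂ ∣ P := by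
      intro P hP hqP
      have hPc0 : φ P.content ≠ 0 := by
        have : P.content ≠ 0 := fun hc => hP (Polynomial.content_eq_zero_iff.mp hc)
        exact fun hc => this (hinj (by simpa using hc))
      have h3 : q₂.map φ ∣ P.map φ := hassoc.symm.dvd.trans hqP
      have h4 : P.map φ = Polynomial.C (φ P.content) * P.primPart.map φ := by
        conv_lhs => rw [P.eq_C_content_mul_primPart]
        rw [Polynomial.map_mul, Polynomial.map_C]
      rw [h4] at h3
      have hCu : IsUnit (Polynomial.C (φ P.content)) :=
        Polynomial.isUnit_C.mpr (isUnit_iff_ne_zero.mpr hPc0)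
      have h5 : q₂.map φ ∣ P.primPart.map φ := (hCu.dvd_mul_left).mp h3
      exact (hq₂prim.dvd_of_fraction_map_dvd_fraction_map h5).trans
        P.primPart_dvd
    have hq₂F : q₂ ∣ F := hdvd F hF hqF
    have hq₂G : q₂ ∣ G := by
      by_cases hG : G = 0
      · simp [hG]
      · exact hdvd G hG hqG
    have hq₂u : IsUnit q₂ := h hq₂F hq₂G
    have : IsUnit (q₂.map φ) := by
      have := hq₂u.map (Polynomial.mapRingHom φ)
      simpa using this
    exact hqirr.not_isUnit (hassoc.symm.isUnit this)
  obtain ⟨u₀, v₀, huv⟩ := hco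
  obtain ⟨bu, hbu⟩ := IsLocalization.integerNormalization_map_to_map A⁰ u₀
  obtain ⟨bv, hbv⟩ := IsLocalization.integerNormalization_map_to_map A⁰ v₀
  set u₁ := IsLocalization.integerNormalization A⁰ u₀ with hu₁def
  set v₁ := IsLocalization.integerNormalization A⁰ v₀ with hv₁def
  refine ⟨Polynomial.C (bv : A) * u₁, Polynomial.C (bu : A) * v₁, (bu : A) * (bv : A),
    mul_ne_zero (nonZeroDivisors.coe_ne_zero bu) (nonZeroDivisors.coe_ne_zero bv), ?_⟩
  apply hpinj
  rw [Polynomial.map_add, Polynomial.map_mul, Polynomial.map_mul, Polynomial.map_mul,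
    Polynomial.map_mul, Polynomial.map_C, Polynomial.map_C, Polynomial.map_C, hbu, hbv,
    Algebra.smul_def, Algebra.smul_def]
  have hbu' : algebraMap A (Polynomial K) (bu : A) = Polynomial.C (φ (bu : A)) := rfl
  have hbv' : algebraMap A (Polynomial K) (bv : A) = Polynomial.C (φ (bv : A)) := rfl
  rw [hbu', hbv', map_mul, Polynomial.C_mul]
  linear_combination (Polynomial.C (φ (bu : A)) * Polynomial.C (φ (bv : A))) * huv


lemma aux_eval {n : ℕ} (p : MvPolynomial (Fin (n + 1)) ℝ) (a' : Fin n → ℝ) (t : ℝ) :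
    Polynomial.eval₂ (MvPolynomial.eval a') t
      ((MvPolynomial.optionEquivLeft ℝ (Fin n)) (MvPolynomial.rename finSuccEquivLast p))
      = MvPolynomial.eval (Fin.snoc a' t) p := by
  have key : (Polynomial.eval₂RingHom
        (MvPolynomial.eval a' : MvPolynomial (Fin n) ℝ →+* ℝ) t).comp
      (((MvPolynomial.optionEquivLeft ℝ (Fin n)) : MvPolynomial (Option (Fin n)) ℝ ≃+*
          Polynomial (MvPolynomial (Fin n) ℝ)).toRingHom.comp
        ((MvPolynomial.rename (finSuccEquivLast : Fin (n + 1) ≃ Option (Fin n))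
            (R := ℝ)).toRingHom))
      = (MvPolynomial.eval (Fin.snoc a' t) : MvPolynomial (Fin (n + 1)) ℝ →+* ℝ) := by
    apply MvPolynomial.ringHom_ext
    · intro r
      simp [MvPolynomial.optionEquivLeft_C]
    · intro i
      refine Fin.lastCases ?_ ?_ i
      · simp [MvPolynomial.optionEquivLeft_X_none]
      · intro j
        simp [MvPolynomial.optionEquivLeft_X_some]
  have := RingHom.congr_fun key p
  simpa using this



theorem stmt_2 (n : ℕ) (f g : MvPolynomial (Fin (n + 1)) ℝ) (h : IsRelPrime f g)
    (a : Fin n → ℝ) (r : ℝ) (hr : 0 < r) :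
    ∃ a' : Fin n → ℝ, Real.sqrt (∑ i, (a i - a' i) ^ 2) < r ∧
      ∀ t : ℝ, ¬ (MvPolynomial.eval (Fin.snoc a' t) f = 0 ∧
                   MvPolynomial.eval (Fin.snoc a' t) g = 0) := by
  have htriv : ∀ p : MvPolynomial (Fin (n + 1)) ℝ, IsUnit p →
      ∀ x : Fin (n + 1) → ℝ, MvPolynomial.eval x p ≠ 0 := by
    intro p hp x
    exact (hp.map (MvPolynomial.eval x)).ne_zero
  by_cases hf : IsUnit f
  · exact ⟨a, by simpa using hr, fun t ht => htriv f hf _ ht.1⟩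
  by_cases hg : IsUnit g
  · exact ⟨a, by simpa using hr, fun t ht => htriv g hg _ ht.2⟩
  have hf0 : f ≠ 0 := fun h0 => hg (isRelPrime_zero_left.mp (h0 ▸ h))
  -- transfer to Polynomial (MvPolynomial (Fin n) ℝ)
  set Φ : MvPolynomial (Fin (n + 1)) ℝ ≃ₐ[ℝ] Polynomial (MvPolynomial (Fin n) ℝ) :=
    (MvPolynomial.renameEquiv ℝ finSuccEquivLast).trans
      (MvPolynomial.optionEquivLeft ℝ (Fin n)) with hΦdef
  have hΦeval : ∀ (p : MvPolynomial (Fin (n + 1)) ℝ) (a' : Fin n → ℝ) (t : ℝ),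
      Polynomial.eval₂ (MvPolynomial.eval a') t (Φ p) = MvPolynomial.eval (Fin.snoc a' t) p := by
    intro p a' t
    rw [hΦdef]
    simp only [AlgEquiv.trans_apply, MvPolynomial.renameEquiv_apply]
    exact aux_eval p a' t
  have hFG : IsRelPrime (Φ f) (Φ g) := by
    intro d hdF hdG
    have h1 : Φ.symm d ∣ f := by
      obtain ⟨c, hc⟩ := hdF
      refine ⟨Φ.symm c, ?_⟩
      have := congrArg Φ.symm hc
      simpa [map_mul] using this
    have h2 : Φ.symm d ∣ g := by
      obtain ⟨c, hc⟩ := hdG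
      refine ⟨Φ.symm c, ?_⟩
      have := congrArg Φ.symm hc
      simpa [map_mul] using this
    have h3 := (h h1 h2).map Φ
    rwa [AlgEquiv.apply_symm_apply] at h3
  have hF0 : Φ f ≠ 0 := fun h0 => hf0 (by simpa using congrArg Φ.symm h0)
  obtain ⟨u, v, d, hd0, hbez⟩ := aux_bezout hFG hF0
  obtain ⟨a', ha'r, ha'd⟩ := aux_near d hd0 a hr
  refine ⟨a', ha'r, ?_⟩
  rintro t ⟨h1, h2⟩
  apply ha'd
  have e1 : Polynomial.eval₂ (MvPolynomial.eval a') t (Φ f) = 0 := by rw [hΦeval]; exact h1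
  have e2 : Polynomial.eval₂ (MvPolynomial.eval a') t (Φ g) = 0 := by rw [hΦeval]; exact h2
  have e3 := congrArg (Polynomial.eval₂RingHom
    (MvPolynomial.eval a' : MvPolynomial (Fin n) ℝ →+* ℝ) t) hbez
  simpa [e1, e2] using e3.symm
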